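/- arXiv:1711.00320 — 7 statements merged into one kernel-verified Lean document; each statement's English description precedes it below -/
import Mathlib

section
/- (Proposition 2, optimality of the closed-form aggregation step.) Let N ≥ 1, M ≥ 1, ρ > 0, p ∈ ℝ^N, and y_b, λ_b ∈ ℝ^N for b = 1,…,M be given, and set Ω := (1/M) Σ_{b=1}^M (ρ y_b − λ_b), Y* := (M/(ρN)) 1_{N×N}(Ω + p), and ȳ*_b := (1/ρ)(ρ y_b − λ_b − Ω) + (1/M) Y*. Then for every Y ∈ ℝ^N and ȳ_1,…,ȳ_M ∈ ℝ^N satisfying Y = Σ_{b=1}^M ȳ_b and Y^1 = ⋯ = Y^N, one has Σ_{b=1}^M ( λ_b^⊤ ȳ*_b + (ρ/2)‖ȳ*_b − y_b‖_2² ) − p^⊤ Y* ≤ Σ_{b=1}^M ( λ_b^⊤ ȳ_b + (ρ/2)‖ȳ_b − y_b‖_2² ) − p^⊤ Y; that is, (Y*, {ȳ*_b}_b) minimizes the aggregation-step problem. -/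
/-- **Proposition 2.** Optimality of the closed-form aggregation step:
the point `(Y*, {ȳ*_b}_b)` minimizes the aggregation-step objective
`Σ_b (λ_b⊤ ȳ_b + (ρ/2)‖ȳ_b − y_b‖²) − p⊤ Y` over all feasible `(Y, {ȳ_b}_b)`
with `Y = Σ_b ȳ_b` and all entries of `Y` equal. -/
theorem aggregation_step_optimality
    (N M : ℕ) (hN : 1 ≤ N) (hM : 1 ≤ M)
    (ρ : ℝ) (hρ : 0 < ρ) (p : Fin N → ℝ)
    (y lam : Fin M → Fin N → ℝ)
    (Ω : Fin N → ℝ)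
    (hΩ : ∀ k, Ω k = (1 / (M : ℝ)) * ∑ b, (ρ * y b k - lam b k))
    (Ystar : Fin N → ℝ)
    (hY : ∀ k, Ystar k = ((M : ℝ) / (ρ * (N : ℝ))) * ∑ j, (Ω j + p j))
    (ybarstar : Fin M → Fin N → ℝ)
    (hybar : ∀ b k, ybarstar b k =
      (1 / ρ) * (ρ * y b k - lam b k - Ω k) + (1 / (M : ℝ)) * Ystar k)
    (Y : Fin N → ℝ) (ybar : Fin M → Fin N → ℝ)
    (hfeas : ∀ k, Y k = ∑ b, ybar b k)
    (hconst : ∀ k k', Y k = Y k') :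
    (∑ b, ((∑ k, lam b k * ybarstar b k)
        + (ρ / 2) * ∑ k, (ybarstar b k - y b k) ^ 2)) - ∑ k, p k * Ystar k
      ≤ (∑ b, ((∑ k, lam b k * ybar b k)
        + (ρ / 2) * ∑ k, (ybar b k - y b k) ^ 2)) - ∑ k, p k * Y k := by
  have hMpos : (0:ℝ) < (M:ℝ) := by exact_mod_cast hM
  have hNpos : (0:ℝ) < (N:ℝ) := by exact_mod_cast hN
  have hρ0 : ρ ≠ 0 := ne_of_gt hρ
  have hM0 : (M:ℝ) ≠ 0 := ne_of_gt hMpos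
  have hN0 : (N:ℝ) ≠ 0 := ne_of_gt hNpos
  set g : Fin N → ℝ := fun k => (ρ / M) * Ystar k - (Ω k + p k) with hg
  -- gradient identity
  have hgrad : ∀ b k, lam b k + ρ * (ybarstar b k - y b k) - p k = g k := by
    intro b k
    simp only [hg]
    rw [hybar b k]
    field_simp
    ring
  -- sum of gradient is zero
  have hsumg : ∑ k, g k = 0 := by
    have h1 : ∑ k : Fin N, (ρ / M) * Ystar k = ∑ j, (Ω j + p j) := by
      have : ∀ k : Fin N, (ρ / M) * Ystar k = (1/(N:ℝ)) * ∑ j, (Ω j + p j) := by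
        intro k; rw [hY k]; field_simp
      rw [Finset.sum_congr rfl (fun k _ => this k), Finset.sum_const,
        Finset.card_univ, Fintype.card_fin, nsmul_eq_mul]
      field_simp
    simp only [hg]
    rw [Finset.sum_sub_distrib, h1, sub_self]
  -- Y* is the sum of the ybarstar
  have hsumstar : ∀ k, ∑ b, ybarstar b k = Ystar k := by
    intro k
    have h1 : ∑ b, (ρ * y b k - lam b k) = (M:ℝ) * Ω k := by
      rw [hΩ k]; field_simp
    calc ∑ b, ybarstar b k
        = ∑ b, ((1/ρ) * (ρ * y b k - lam b k) + (-(1/ρ) * Ω k + (1/(M:ℝ)) * Ystar k)) := by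
          refine Finset.sum_congr rfl fun b _ => ?_
          rw [hybar]; ring
      _ = (1/ρ) * ∑ b, (ρ * y b k - lam b k)
            + (M:ℝ) * (-(1/ρ) * Ω k + (1/(M:ℝ)) * Ystar k) := by
          rw [Finset.sum_add_distrib, ← Finset.mul_sum, Finset.sum_const,
            Finset.card_univ, Fintype.card_fin, nsmul_eq_mul]
      _ = Ystar k := by rw [h1]; field_simp; ring
  -- Ystar is constant
  have hYconst : ∀ k k', Ystar k = Ystar k' := by intro k k'; rw [hY k, hY k']
  -- main rewriting of the difference
  have key :
      ((∑ b, ((∑ k, lam b k * ybar b k)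
        + (ρ / 2) * ∑ k, (ybar b k - y b k) ^ 2)) - ∑ k, p k * Y k)
      - ((∑ b, ((∑ k, lam b k * ybarstar b k)
        + (ρ / 2) * ∑ k, (ybarstar b k - y b k) ^ 2)) - ∑ k, p k * Ystar k)
      = (∑ b, ∑ k, (ρ/2) * (ybar b k - ybarstar b k)^2)
        + ∑ k, g k * (Y k - Ystar k) := by
    have hYd : ∀ k, Y k - Ystar k = ∑ b, (ybar b k - ybarstar b k) := by
      intro k
      rw [hfeas k, ← hsumstar k, Finset.sum_sub_distrib]
    have expand : ∀ b k,
        (lam b k * ybar b k + (ρ/2) * (ybar b k - y b k)^2)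
        - (lam b k * ybarstar b k + (ρ/2) * (ybarstar b k - y b k)^2)
        - p k * (ybar b k - ybarstar b k)
        = (ρ/2) * (ybar b k - ybarstar b k)^2
          + (lam b k + ρ * (ybarstar b k - y b k) - p k) * (ybar b k - ybarstar b k) := by
      intro b k; ring
    have lhs_eq :
        ((∑ b, ((∑ k, lam b k * ybar b k)
          + (ρ / 2) * ∑ k, (ybar b k - y b k) ^ 2)) - ∑ k, p k * Y k)
        - ((∑ b, ((∑ k, lam b k * ybarstar b k)
          + (ρ / 2) * ∑ k, (ybarstar b k - y b k) ^ 2)) - ∑ k, p k * Ystar k)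
        = ∑ b, ∑ k,
            ((lam b k * ybar b k + (ρ/2) * (ybar b k - y b k)^2)
            - (lam b k * ybarstar b k + (ρ/2) * (ybarstar b k - y b k)^2)
            - p k * (ybar b k - ybarstar b k)) := by
      have hp : ∑ k, p k * Y k - ∑ k, p k * Ystar k
          = ∑ b, ∑ k, p k * (ybar b k - ybarstar b k) := by
        rw [← Finset.sum_sub_distrib]
        rw [Finset.sum_comm]
        refine Finset.sum_congr rfl fun k _ => ?_
        rw [← Finset.mul_sum, ← hYd k]; ring
      simp only [Finset.sum_sub_distrib, Finset.sum_add_distrib, Finset.mul_sum]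
      rw [← hp]
      ring
    rw [lhs_eq]
    rw [Finset.sum_congr rfl (fun b _ => Finset.sum_congr rfl (fun k _ => expand b k))]
    simp only [Finset.sum_add_distrib]
    congr 1
    rw [Finset.sum_comm]
    refine Finset.sum_congr rfl fun k _ => ?_
    rw [hYd k, Finset.mul_sum]
    refine Finset.sum_congr rfl fun b _ => ?_
    rw [hgrad b k]
  -- the linear term vanishes
  have hzero : ∑ k, g k * (Y k - Ystar k) = 0 := by
    have i0 : Fin N := ⟨0, hN⟩
    have : ∀ k, Y k - Ystar k = Y i0 - Ystar i0 := by
      intro k; rw [hconst k i0, hYconst k i0]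
    rw [Finset.sum_congr rfl (fun k _ => by rw [this k])]
    rw [← Finset.sum_mul, hsumg, zero_mul]
  have hnn : 0 ≤ ∑ b, ∑ k : Fin N, (ρ/2) * (ybar b k - ybarstar b k)^2 := by
    refine Finset.sum_nonneg fun b _ => Finset.sum_nonneg fun k _ => ?_
    positivity
  linarith [key, hzero, hnn]
end

section
/- (Uniqueness of the aggregation-step minimizer.) Let N ≥ 1, M ≥ 1, ρ > 0, p ∈ ℝ^N, and y_b, λ_b ∈ ℝ^N for b = 1,…,M be given, and set Ω := (1/M) Σ_{b=1}^M (ρ y_b − λ_b), Y* := (M/(ρN)) 1_{N×N}(Ω + p), and ȳ*_b := (1/ρ)(ρ y_b − λ_b − Ω) + (1/M) Y*. If (Y, {ȳ_b}_b) is feasible for the aggregation-step problem (Y = Σ_b ȳ_b and Y^1 = ⋯ = Y^N) and attains an objective value less than or equal to that of (Y*, {ȳ*_b}_b), then Y = Y* and ȳ_b = ȳ*_b for every b = 1,…,M. -/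
/-- Uniqueness of the aggregation-step minimizer: any feasible
point whose objective value is at most that of `(Y*, {ȳ*_b}_b)` must coincide
with `(Y*, {ȳ*_b}_b)`. -/
theorem aggregation_step_uniqueness
    (N M : ℕ) (hN : 1 ≤ N) (hM : 1 ≤ M)
    (ρ : ℝ) (hρ : 0 < ρ) (p : Fin N → ℝ)
    (y lam : Fin M → Fin N → ℝ)
    (Ω : Fin N → ℝ)
    (hΩ : ∀ k, Ω k = (1 / (M : ℝ)) * ∑ b, (ρ * y b k - lam b k))
    (Ystar : Fin N → ℝ)
    (hY : ∀ k, Ystar k = ((M : ℝ) / (ρ * (N : ℝ))) * ∑ j, (Ω j + p j))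
    (ybarstar : Fin M → Fin N → ℝ)
    (hybar : ∀ b k, ybarstar b k =
      (1 / ρ) * (ρ * y b k - lam b k - Ω k) + (1 / (M : ℝ)) * Ystar k)
    (Y : Fin N → ℝ) (ybar : Fin M → Fin N → ℝ)
    (hfeas : ∀ k, Y k = ∑ b, ybar b k)
    (hconst : ∀ k k', Y k = Y k')
    (hobj : (∑ b, ((∑ k, lam b k * ybar b k)
        + (ρ / 2) * ∑ k, (ybar b k - y b k) ^ 2)) - ∑ k, p k * Y k
      ≤ (∑ b, ((∑ k, lam b k * ybarstar b k)
        + (ρ / 2) * ∑ k, (ybarstar b k - y b k) ^ 2)) - ∑ k, p k * Ystar k) :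
    Y = Ystar ∧ ∀ b, ybar b = ybarstar b := by
  have hMne : (M : ℝ) ≠ 0 := Nat.cast_ne_zero.mpr (by omega)
  have hNne : (N : ℝ) ≠ 0 := Nat.cast_ne_zero.mpr (by omega)
  have hρne : ρ ≠ 0 := ne_of_gt hρ
  set c : Fin N → ℝ := fun k => (ρ / (M : ℝ)) * Ystar k - Ω k - p k with hc
  -- relation defining ybarstar
  have hrel : ∀ b k, ρ * ybarstar b k
      = ρ * y b k - lam b k - Ω k + (ρ / (M : ℝ)) * Ystar k := by
    intro b k; rw [hybar]; field_simp
  -- star point is feasible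
  have hsumstar : ∀ k, ∑ b, ybarstar b k = Ystar k := by
    intro k
    have h1 : ∑ b, (ρ * y b k - lam b k) = (M : ℝ) * Ω k := by
      rw [hΩ]; field_simp
    have : ∑ b, ybarstar b k
        = (1 / ρ) * ((∑ b, (ρ * y b k - lam b k)) - (M : ℝ) * Ω k)
          + (M : ℝ) * ((1 / (M : ℝ)) * Ystar k) := by
      simp only [hybar]
      rw [Finset.sum_add_distrib, Finset.sum_const, Finset.card_univ, Fintype.card_fin,
        nsmul_eq_mul]
      congr 1
      have h3 : ∀ b : Fin M, 1 / ρ * (ρ * y b k - lam b k - Ω k)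
          = 1 / ρ * (ρ * y b k - lam b k) - 1 / ρ * Ω k := fun b => by ring
      simp only [h3]
      rw [Finset.sum_sub_distrib, Finset.sum_const, Finset.card_univ, Fintype.card_fin,
        nsmul_eq_mul, ← Finset.mul_sum]
      ring
    rw [this, h1]
    field_simp; ring
  -- rewrite objective as a double sum
  have e1 : ∀ (yb : Fin M → Fin N → ℝ) (Yv : Fin N → ℝ), (∀ k, Yv k = ∑ b, yb b k) →
      (∑ b, ((∑ k, lam b k * yb b k) + (ρ / 2) * ∑ k, (yb b k - y b k) ^ 2))
        - ∑ k, p k * Yv k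
      = ∑ b, ∑ k, (lam b k * yb b k + (ρ / 2) * (yb b k - y b k) ^ 2
          - p k * yb b k) := by
    intro yb Yv hv
    have hp : ∑ k, p k * Yv k = ∑ b, ∑ k, p k * yb b k := by
      simp only [hv, Finset.mul_sum]; exact Finset.sum_comm
    rw [hp, ← Finset.sum_sub_distrib]
    apply Finset.sum_congr rfl
    intro b _
    rw [Finset.mul_sum, ← Finset.sum_add_distrib, ← Finset.sum_sub_distrib]
  have eL := e1 ybar Y hfeas
  have eR := e1 ybarstar Ystar (fun k => (hsumstar k).symm)
  rw [eL, eR] at hobj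
  -- per-term identity
  have pid : ∀ b k, lam b k * ybar b k + (ρ / 2) * (ybar b k - y b k) ^ 2
        - p k * ybar b k
      = (lam b k * ybarstar b k + (ρ / 2) * (ybarstar b k - y b k) ^ 2
          - p k * ybarstar b k)
        + c k * (ybar b k - ybarstar b k)
        + (ρ / 2) * (ybar b k - ybarstar b k) ^ 2 := by
    intro b k
    have h := hrel b k
    simp only [hc]
    linear_combination (ybar b k - ybarstar b k) * h
  -- sum of c vanishes
  have hc0 : ∑ k, c k = 0 := by
    have hYk : ∀ k, (ρ / (M : ℝ)) * Ystar k
        = (1 / (N : ℝ)) * ∑ j, (Ω j + p j) := by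
      intro k; rw [hY]; field_simp
    simp only [hc, hYk, sub_sub]
    rw [Finset.sum_sub_distrib, Finset.sum_const, Finset.card_univ, Fintype.card_fin,
      nsmul_eq_mul]
    rw [show ∀ x y : ℝ, x - y = 0 ↔ x = y from fun x y => sub_eq_zero]
    field_simp
  -- Y and Ystar are constant vectors
  obtain ⟨k0, _⟩ : ∃ k0 : Fin N, True := ⟨⟨0, hN⟩, trivial⟩
  have hYstarconst : ∀ k, Ystar k = Ystar k0 := by intro k; rw [hY, hY]
  have hYc : ∀ k, Y k = Y k0 := fun k => hconst k k0
  -- the linear term vanishes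
  have hlin : ∑ k, c k * (Y k - Ystar k) = 0 := by
    have : ∀ k, c k * (Y k - Ystar k) = c k * (Y k0 - Ystar k0) := by
      intro k; rw [hYc k, hYstarconst k]
    simp only [this]
    rw [← Finset.sum_mul, hc0, zero_mul]
  -- extract the sum-of-squares bound
  have hQ : ∑ b, ∑ k, (ρ / 2) * (ybar b k - ybarstar b k) ^ 2 ≤ 0 := by
    have hexp : ∑ b, ∑ k, (lam b k * ybar b k + (ρ / 2) * (ybar b k - y b k) ^ 2
          - p k * ybar b k)
        = ∑ b, ∑ k, (lam b k * ybarstar b k + (ρ / 2) * (ybarstar b k - y b k) ^ 2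
            - p k * ybarstar b k)
          + ∑ k, c k * (Y k - Ystar k)
          + ∑ b, ∑ k, (ρ / 2) * (ybar b k - ybarstar b k) ^ 2 := by
      have h2 : ∑ b, ∑ k, c k * (ybar b k - ybarstar b k)
          = ∑ k, c k * (Y k - Ystar k) := by
        rw [Finset.sum_comm]
        apply Finset.sum_congr rfl
        intro k _
        rw [← Finset.mul_sum, Finset.sum_sub_distrib, ← hfeas k, hsumstar k]
      calc ∑ b, ∑ k, (lam b k * ybar b k + (ρ / 2) * (ybar b k - y b k) ^ 2
              - p k * ybar b k)
          = ∑ b, ∑ k, ((lam b k * ybarstar b k + (ρ / 2) * (ybarstar b k - y b k) ^ 2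
              - p k * ybarstar b k)
            + c k * (ybar b k - ybarstar b k)
            + (ρ / 2) * (ybar b k - ybarstar b k) ^ 2) := by
            apply Finset.sum_congr rfl; intro b _
            apply Finset.sum_congr rfl; intro k _
            exact pid b k
        _ = _ := by
            simp only [Finset.sum_add_distrib]
            rw [h2]
    rw [hexp, hlin, add_zero] at hobj
    linarith
  -- each square term is zero
  have hzero : ∀ b, ∀ k, ybar b k = ybarstar b k := by
    have hnn : ∀ b ∈ Finset.univ, (0:ℝ) ≤ ∑ k, (ρ / 2) * (ybar b k - ybarstar b k) ^ 2 := by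
      intro b _
      apply Finset.sum_nonneg
      intro k _; positivity
    have hsum0 : ∑ b, ∑ k, (ρ / 2) * (ybar b k - ybarstar b k) ^ 2 = 0 :=
      le_antisymm hQ (Finset.sum_nonneg hnn)
    intro b k
    have hb := (Finset.sum_eq_zero_iff_of_nonneg hnn).mp hsum0 b (Finset.mem_univ b)
    have hk := (Finset.sum_eq_zero_iff_of_nonneg
      (fun k _ => by positivity)).mp hb k (Finset.mem_univ k)
    have : (ybar b k - ybarstar b k) ^ 2 = 0 := by
      have h2 : ρ / 2 ≠ 0 := by positivity
      exact (mul_eq_zero.mp hk).resolve_left h2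
    have := pow_eq_zero_iff (n := 2) (by norm_num) |>.mp this
    linarith [sub_eq_zero.mp this]
  constructor
  · funext k
    rw [hfeas k, ← hsumstar k]
    exact Finset.sum_congr rfl (fun b _ => hzero b k)
  · intro b; funext k; exact hzero b k
end

section
/- (KKT verification, Appendix B.) Let N ≥ 1, M ≥ 1, ρ > 0, p ∈ ℝ^N, and y_b, λ_b ∈ ℝ^N for b = 1,…,M be given. Define the scalar Y*^k := (1/(ρN)) ( Σ_{b=1}^M Σ_{k=1}^N (ρ y_b^k − λ_b^k) + M Σ_{k=1}^N p^k ), the vector Y* := Y*^k · 1_{N×1} ∈ ℝ^N, the multiplier η* := (1/M) ( Σ_{b=1}^M (ρ y_b − λ_b) − ρ Y* ) ∈ ℝ^N, and ȳ*_b := y_b − (1/ρ)(λ_b + η*) ∈ ℝ^N for each b. Then the KKT conditions of the aggregation-step problem hold: (a) Σ_{k=1}^N (η*^k + p^k) = 0; (b) ȳ*_b = y_b − (1/ρ)(λ_b + η*) for each b (stationarity in ȳ_b); and (c) Y* = Σ_{b=1}^M ȳ*_b (primal feasibility). Moreover ȳ*_b agrees with the formula ȳ*_b = (1/ρ)(ρ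 y_b − λ_b − Ω) + (1/M) Y*, where Ω := (1/M) Σ_{b=1}^M (ρ y_b − λ_b). -/
/-- **KKT verification, Appendix B.** The closed-form quantities
`Y*`, `η*`, `ȳ*_b` satisfy the KKT conditions of the aggregation-step problem:
(a) `Σ_k (η*^k + p^k) = 0`; (b) stationarity `ȳ*_b = y_b − (1/ρ)(λ_b + η*)`;
(c) primal feasibility `Y* = Σ_b ȳ*_b`; and moreover `ȳ*_b` agrees with the
formula `ȳ*_b = (1/ρ)(ρ y_b − λ_b − Ω) + (1/M) Y*`. -/
theorem aggregation_step_kkt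
    (N M : ℕ) (hN : 1 ≤ N) (hM : 1 ≤ M)
    (ρ : ℝ) (hρ : 0 < ρ) (p : Fin N → ℝ)
    (y lam : Fin M → Fin N → ℝ)
    (Yk : ℝ)
    (hYk : Yk = (1 / (ρ * (N : ℝ))) *
      ((∑ b, ∑ k, (ρ * y b k - lam b k)) + (M : ℝ) * ∑ k, p k))
    (Ystar : Fin N → ℝ) (hY : ∀ k, Ystar k = Yk)
    (etastar : Fin N → ℝ)
    (heta : ∀ k, etastar k =
      (1 / (M : ℝ)) * ((∑ b, (ρ * y b k - lam b k)) - ρ * Ystar k))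
    (ybarstar : Fin M → Fin N → ℝ)
    (hybar : ∀ b k, ybarstar b k = y b k - (1 / ρ) * (lam b k + etastar k))
    (Ω : Fin N → ℝ)
    (hΩ : ∀ k, Ω k = (1 / (M : ℝ)) * ∑ b, (ρ * y b k - lam b k)) :
    (∑ k, (etastar k + p k) = 0) ∧
    (∀ b k, ybarstar b k = y b k - (1 / ρ) * (lam b k + etastar k)) ∧
    (∀ k, Ystar k = ∑ b, ybarstar b k) ∧
    (∀ b k, ybarstar b k =
      (1 / ρ) * (ρ * y b k - lam b k - Ω k) + (1 / (M : ℝ)) * Ystar k) := by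
  have hNne : (N:ℝ) ≠ 0 := by positivity
  have hMne : (M:ℝ) ≠ 0 := by positivity
  have hρne : ρ ≠ 0 := ne_of_gt hρ
  refine ⟨?_, hybar, ?_, ?_⟩
  · have : ∑ k, (etastar k + p k)
        = (1 / (M:ℝ)) * ((∑ k, ∑ b, (ρ * y b k - lam b k)) - ρ * ((N:ℝ) * Yk))
          + ∑ k, p k := by
      rw [Finset.sum_add_distrib]
      congr 1
      simp only [heta, hY]
      rw [← Finset.mul_sum, Finset.sum_sub_distrib, ← Finset.mul_sum,
        Finset.sum_const, Finset.card_univ, Fintype.card_fin, nsmul_eq_mul]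
    rw [this, Finset.sum_comm, hYk]
    field_simp
    ring
  · intro k
    have hsum : ∑ b, ybarstar b k
        = (∑ b, y b k) - (1/ρ) * ((∑ b, lam b k) + (M:ℝ) * etastar k) := by
      simp only [hybar]
      rw [Finset.sum_sub_distrib, ← Finset.mul_sum, Finset.sum_add_distrib,
        Finset.sum_const, Finset.card_univ, Fintype.card_fin, nsmul_eq_mul]
    rw [hsum, heta k, hY k]
    have h2 : ∑ b, (ρ * y b k - lam b k) = ρ * ∑ b, y b k - ∑ b, lam b k := by
      rw [Finset.sum_sub_distrib, Finset.mul_sum]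
    rw [h2]
    field_simp
    ring
  · intro b k
    rw [hybar b k, heta k, hΩ k, hY k]
    field_simp
    ring
end

section
/- (Proposition 4(i)–(ii): building-invariant Lagrange multipliers.) Let N ≥ 1, M ≥ 1, ρ > 0, p ∈ ℝ^N, and y_b, λ_b ∈ ℝ^N for b = 1,…,M be given, and set Ω := (1/M) Σ_{b=1}^M (ρ y_b − λ_b), Y* := (M/(ρN)) 1_{N×N}(Ω + p), and ȳ*_b := (1/ρ)(ρ y_b − λ_b − Ω) + (1/M) Y*. Then for every b = 1,…,M, the updated multiplier λ_b + ρ(ȳ*_b − y_b) equals (ρ/M) Y* − Ω. In particular, after one iteration of the algorithm all buildings carry the same Lagrange multiplier Λ := (ρ/M) Y* − Ω, independent of b. -/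
/-- **Proposition 4(i)–(ii).** After one ADMM iteration the
updated Lagrange multiplier `λ_b + ρ(ȳ*_b − y_b)` equals `(ρ/M) Y* − Ω` for
every building `b`; in particular it is the same for all buildings. -/
theorem building_invariant_multiplier
    (N M : ℕ) (hN : 1 ≤ N) (hM : 1 ≤ M)
    (ρ : ℝ) (hρ : 0 < ρ) (p : Fin N → ℝ)
    (y lam : Fin M → Fin N → ℝ)
    (Ω : Fin N → ℝ)
    (hΩ : ∀ k, Ω k = (1 / (M : ℝ)) * ∑ b, (ρ * y b k - lam b k))
    (Ystar : Fin N → ℝ)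
    (hY : ∀ k, Ystar k = ((M : ℝ) / (ρ * (N : ℝ))) * ∑ j, (Ω j + p j))
    (ybarstar : Fin M → Fin N → ℝ)
    (hybar : ∀ b k, ybarstar b k =
      (1 / ρ) * (ρ * y b k - lam b k - Ω k) + (1 / (M : ℝ)) * Ystar k)
    (Lambda : Fin N → ℝ)
    (hLambda : ∀ k, Lambda k = (ρ / (M : ℝ)) * Ystar k - Ω k) :
    ∀ b k, lam b k + ρ * (ybarstar b k - y b k) = Lambda k := by
  intro b k
  have hM0 : (M : ℝ) ≠ 0 := by positivity
  rw [hybar, hLambda]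
  field_simp
  ring
end

section
/- (Proposition 4(iii): total reward is preserved by Lagrangian-based allocation at convergence.) Let N ≥ 1, M ≥ 1, ρ > 0, p ∈ ℝ^N, and Ω ∈ ℝ^N. Define Y := (M/(ρN)) 1_{N×N}(Ω + p) and Λ := (ρ/M) Y − Ω. Suppose y_1,…,y_M ∈ ℝ^N satisfy Σ_{b=1}^M y_b = Y. Then the Lagrangian-based rewards r_b^Λ := Λ^⊤ y_b satisfy Σ_{b=1}^M r_b^Λ = p^⊤ Y, i.e., exactly the total reward R = p^⊤ Y is distributed. -/
/-- **Proposition 4(iii).** At a converged ADMM solution the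
Lagrangian-based rewards `r_b^Λ = Λ⊤ y_b` distribute exactly the total reward:
`Σ_b r_b^Λ = p⊤ Y`. -/
theorem lagrangian_reward_total
    (N M : ℕ) (hN : 1 ≤ N) (hM : 1 ≤ M)
    (ρ : ℝ) (hρ : 0 < ρ) (p Ω : Fin N → ℝ)
    (Y : Fin N → ℝ)
    (hY : ∀ k, Y k = ((M : ℝ) / (ρ * (N : ℝ))) * ∑ j, (Ω j + p j))
    (Lambda : Fin N → ℝ)
    (hLambda : ∀ k, Lambda k = (ρ / (M : ℝ)) * Y k - Ω k)
    (y : Fin M → Fin N → ℝ)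
    (hsum : ∀ k, ∑ b, y b k = Y k) :
    ∑ b, (∑ k, Lambda k * y b k) = ∑ k, p k * Y k := by
  have hN0 : (N : ℝ) ≠ 0 := by positivity
  have hM0 : (M : ℝ) ≠ 0 := by positivity
  have hρ0 : ρ ≠ 0 := hρ.ne'
  have h1 : ∑ b, (∑ k, Lambda k * y b k) = ∑ k, Lambda k * Y k := by
    rw [Finset.sum_comm]
    simp_rw [← Finset.mul_sum, hsum]
  rw [h1]
  set S := ∑ j, (Ω j + p j) with hS
  have hΛ : ∀ k, Lambda k = S / N - Ω k := by
    intro k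
    rw [hLambda, hY]
    field_simp
  have hsplit : S = (∑ j, Ω j) + ∑ j, p j := Finset.sum_add_distrib
  simp_rw [hΛ, hY]
  rw [← Finset.sum_mul, ← Finset.sum_mul, Finset.sum_sub_distrib,
    Finset.sum_const, Finset.card_fin, nsmul_eq_mul]
  rw [hsplit]
  field_simp
  ring
end

section
/- (Proposition 4(iv): total reward is preserved by Lagrangian-based allocation after feasible extraction.) Let N ≥ 1, M ≥ 1, ρ > 0, p ∈ ℝ^N, and Λ ∈ ℝ^N. Let Y^F ∈ ℝ^N be any constant vector (Y^F = c · 1_{N×1} for some c ∈ ℝ), define Ω^F := (ρ/M) Y^F − Λ and Λ^F := (1/N) 1_{N×N}(Ω^F + p) − Ω^F. Then for any y_1^F,…,y_M^F ∈ ℝ^N with Σ_{b=1}^M y_b^F = Y^F, the rewards r_b^Λ := (Λ^F)^⊤ y_b^F satisfy Σ_{b=1}^M r_b^Λ = p^⊤ Y^F. -/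
/-- **Proposition 4(iv).** After feasible extraction, the
Lagrangian-based rewards with the modified price vector `Λ^F` distribute
exactly the total reward: `Σ_b (Λ^F)⊤ y_b^F = p⊤ Y^F`. -/
theorem lagrangian_reward_total_feasible_extraction
    (N M : ℕ) (hN : 1 ≤ N) (hM : 1 ≤ M)
    (ρ : ℝ) (hρ : 0 < ρ) (p Lambda : Fin N → ℝ)
    (YF : Fin N → ℝ) (c : ℝ) (hYF : ∀ k, YF k = c)
    (ΩF : Fin N → ℝ)
    (hΩF : ∀ k, ΩF k = (ρ / (M : ℝ)) * YF k - Lambda k)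
    (LambdaF : Fin N → ℝ)
    (hLF : ∀ k, LambdaF k = (1 / (N : ℝ)) * (∑ j, (ΩF j + p j)) - ΩF k)
    (yF : Fin M → Fin N → ℝ)
    (hsum : ∀ k, ∑ b, yF b k = YF k) :
    ∑ b, (∑ k, LambdaF k * yF b k) = ∑ k, p k * YF k := by
  have hN0 : (N : ℝ) ≠ 0 := by positivity
  rw [Finset.sum_comm]
  have h1 : ∀ k, ∑ b, LambdaF k * yF b k = LambdaF k * c := by
    intro k
    rw [← Finset.mul_sum, hsum, hYF]
  simp only [h1]
  have h2 : ∑ k, LambdaF k = ∑ k, p k := by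
    simp only [hLF]
    rw [Finset.sum_sub_distrib, Finset.sum_const, Finset.sum_add_distrib]
    rw [Finset.card_univ, Fintype.card_fin, nsmul_eq_mul]
    field_simp
    ring
  calc ∑ k, LambdaF k * c = (∑ k, LambdaF k) * c := by rw [Finset.sum_mul]
    _ = (∑ k, p k) * c := by rw [h2]
    _ = ∑ k, p k * YF k := by rw [Finset.sum_mul]; exact Finset.sum_congr rfl (fun k _ => by rw [hYF])
end

section
/- (Proposition 3: feasible extraction yields a feasible point of the aggregated bidding problem.) For each building b = 1,…,M, let 𝒞_b be a constraint set determined by data (𝐀_b, 𝐁_b, 𝐄_b, x¹_b, v_b, η_b, 𝒳_b, 𝒰_b), and suppose (u_b(·), y_b) ∈ 𝒞_b with y_b ≥ 0 componentwise and Σ_{b=1}^M y_b^k > 0 for every k = 1,…,N. Define c := min_k Σ_{b=1}^M y_b^k, Y^F := c · 1_{N×1}, and (y_b^k)^F := (c / Σ_{j=1}^M y_j^k) · y_b^k. Then there exist policies u_b^F(·) (for instance u_b^F = u_b) such that (u_b^F(·), y_b^F) ∈ 𝒞_b for every b, Σ_{b=1}^M y_b^F = Y^F, and Y^F has all entries equal;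 hence (Y^F, {u_b^F(·), y_b^F}_b) satisfies all constraints of the aggregated bidding problem. -/
/-- Membership in the building constraint set `𝒞` determined by the data
`(𝐀, 𝐁, 𝐄, x¹, v, η, 𝒳, 𝒰)`. -/
def MemBuildingC {n m q N : ℕ}
    (A : Matrix (Fin N × Fin n) (Fin n) ℝ)
    (B : Matrix (Fin N × Fin n) (Fin N × Fin m) ℝ)
    (E : Matrix (Fin N × Fin n) (Fin N × Fin q) ℝ)
    (x1 : Fin n → ℝ) (v : Fin N × Fin q → ℝ) (η : Fin m → ℝ)
    (X : Set ((Fin N × Fin n) → ℝ)) (U : Set ((Fin N × Fin m) → ℝ))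
    (u : (Fin N → ℝ) → ((Fin N × Fin m) → ℝ)) (y : Fin N → ℝ) : Prop :=
  ∃ (Δu : (Fin N → ℝ) → ((Fin N × Fin m) → ℝ))
    (x : (Fin N → ℝ) → ((Fin N × Fin n) → ℝ)),
    ∀ s : Fin N → ℝ, (∀ k, -(y k) ≤ s k ∧ s k ≤ y k) →
      x s = A.mulVec x1 + B.mulVec (u s + Δu s) + E.mulVec v ∧
      x s ∈ X ∧ (u s + Δu s) ∈ U ∧
      ∀ k, s k = ∑ j, η j * Δu s (k, j)

/-- **Proposition 3.** Feasible extraction yields a feasible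
point of the aggregated bidding problem: given `(u_b(·), y_b) ∈ 𝒞_b` with
`y_b ≥ 0` and `Σ_b y_b^k > 0` for all `k`, the clipped constant bid `Y^F` and
the rescaled bids `y_b^F` admit policies `u_b^F(·)` with `(u_b^F(·), y_b^F) ∈ 𝒞_b`
for all `b`, `Σ_b y_b^F = Y^F`, and `Y^F` constant over time. -/
theorem feasible_extraction_feasible
    (N M : ℕ) (hN : 1 ≤ N) (hM : 1 ≤ M)
    (n m q : Fin M → ℕ)
    (A : ∀ b, Matrix (Fin N × Fin (n b)) (Fin (n b)) ℝ)
    (B : ∀ b, Matrix (Fin N × Fin (n b)) (Fin N × Fin (m b)) ℝ)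
    (E : ∀ b, Matrix (Fin N × Fin (n b)) (Fin N × Fin (q b)) ℝ)
    (x1 : ∀ b, Fin (n b) → ℝ) (v : ∀ b, Fin N × Fin (q b) → ℝ)
    (η : ∀ b, Fin (m b) → ℝ)
    (X : ∀ b, Set ((Fin N × Fin (n b)) → ℝ))
    (U : ∀ b, Set ((Fin N × Fin (m b)) → ℝ))
    (u : ∀ b, (Fin N → ℝ) → ((Fin N × Fin (m b)) → ℝ))
    (y : Fin M → Fin N → ℝ)
    (hmem : ∀ b, MemBuildingC (A b) (B b) (E b) (x1 b) (v b) (η b)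
      (X b) (U b) (u b) (y b))
    (hy : ∀ b k, 0 ≤ y b k)
    (hpos : ∀ k, 0 < ∑ b, y b k)
    (c : ℝ)
    (hc : c = Finset.univ.inf' ⟨⟨0, hN⟩, Finset.mem_univ _⟩
      (fun k : Fin N => ∑ b, y b k))
    (YF : Fin N → ℝ) (hYF : ∀ k, YF k = c)
    (yF : Fin M → Fin N → ℝ)
    (hyF : ∀ b k, yF b k = (c / ∑ j, y j k) * y b k) :
    ∃ uF : ∀ b, (Fin N → ℝ) → ((Fin N × Fin (m b)) → ℝ),
      (∀ b, MemBuildingC (A b) (B b) (E b) (x1 b) (v b) (η b)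
        (X b) (U b) (uF b) (yF b)) ∧
      (∀ k, ∑ b, yF b k = YF k) ∧
      (∀ k k', YF k = YF k') := by
  have hcle : ∀ k, c ≤ ∑ b, y b k := by
    intro k; rw [hc]; exact Finset.inf'_le _ (Finset.mem_univ k)
  have hcpos : 0 < c := by
    rw [hc]
    obtain ⟨k, -, hk⟩ := Finset.exists_mem_eq_inf' (⟨⟨0, hN⟩, Finset.mem_univ _⟩ :
      (Finset.univ : Finset (Fin N)).Nonempty) (fun k : Fin N => ∑ b, y b k)
    rw [hk]; exact hpos k
  have hle : ∀ b k, yF b k ≤ y b k := by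
    intro b k
    rw [hyF]
    have hS := hpos k
    calc (c / ∑ j, y j k) * y b k ≤ 1 * y b k := by
          apply mul_le_mul_of_nonneg_right _ (hy b k)
          rw [div_le_one hS]; exact hcle k
      _ = y b k := one_mul _
  refine ⟨u, fun b => ?_, fun k => ?_, fun k k' => by rw [hYF, hYF]⟩
  · obtain ⟨Δu, x, hx⟩ := hmem b
    refine ⟨Δu, x, fun s hs => hx s fun k => ?_⟩
    obtain ⟨h1, h2⟩ := hs k
    exact ⟨le_trans (by linarith [hle b k]) h1, le_trans h2 (hle b k)⟩
  · rw [hYF]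
    simp only [hyF]
    rw [← Finset.mul_sum, div_mul_cancel₀]
    exact (hpos k).ne'
end
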